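/- arXiv:2603.23926 — 2 statements merged into one kernel-verified Lean document; each statement's English description precedes it below -/
import Mathlib

section
/- The clipped optimistic empirical Bellman operator is a γ-contraction in the supremum norm: for all Q, Q' : S×A → ℝ, sup_{(s,a)} |(T̂Q)(s,a) − (T̂Q')(s,a)| ≤ γ · sup_{(s,a)} |Q(s,a) − Q'(s,a)|. -/
open Finset

set_option maxHeartbeats 1000000

/-- Dot product of a probability vector `p` with a value vector `v`. -/
noncomputable def probDot {S : Type*} [Fintype S] (p v : S → ℝ) : ℝ :=
  ∑ s, p s * v s

/-- Variance of `v` under the probability vector `p`. -/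
noncomputable def probVar {S : Type*} [Fintype S] (p v : S → ℝ) : ℝ :=
  (∑ s, p s * (v s) ^ 2) - (probDot p v) ^ 2

/-- `(MQ)(s) = max_a Q(s,a)`. -/
noncomputable def maxOp {S A : Type*} [Fintype A] [Nonempty A] (Q : S → A → ℝ) (s : S) : ℝ :=
  Finset.univ.sup' Finset.univ_nonempty (Q s)

/-- `Clip_H(V)(s) = min (V s) (min_{s'} V s' + H)`. -/
noncomputable def clipOp {S : Type*} [Fintype S] [Nonempty S] (H : ℝ) (V : S → ℝ) (s : S) : ℝ :=
  min (V s) (Finset.univ.inf' Finset.univ_nonempty V + H)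

/-- The exploration bonus `b(s,a,V)`. -/
noncomputable def bonus {S A : Type*} [Fintype S] (Phat : S → A → S → ℝ)
    (cnt : S → A → ℝ) (U H : ℝ) (s : S) (a : A) (V : S → ℝ) : ℝ :=
  max (4 * Real.sqrt (probVar (Phat s a) V * U / cnt s a)) (32 * H * U / cnt s a)

/-- The clipped optimistic empirical Bellman operator `T̂`. -/
noncomputable def bellmanOp {S A : Type*} [Fintype S] [Fintype A] [Nonempty S] [Nonempty A]
    (γ H U : ℝ) (r : S → A → ℝ) (cnt : S → A → ℝ) (Phat : S → A → S → ℝ)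
    (Q : S → A → ℝ) : S → A → ℝ := fun s a =>
  r s a + γ * probDot (Phat s a) (clipOp H (maxOp Q))
    + γ * bonus Phat cnt U H s a (clipOp H (maxOp Q))

lemma probDot_sub {S : Type*} [Fintype S] (p v w : S → ℝ) :
    probDot p v - probDot p w = ∑ s, p s * (v s - w s) := by
  simp [probDot, Finset.sum_sub_distrib, mul_sub]

lemma probVar_nonneg {S : Type*} [Fintype S] (p v : S → ℝ)
    (hp : ∀ s, 0 ≤ p s) (hsum : ∑ s, p s = 1) : 0 ≤ probVar p v := by
  have h : ∑ s, p s * (v s - probDot p v) ^ 2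
      = (∑ s, p s * v s ^ 2) - 2 * probDot p v * (∑ s, p s * v s)
        + (probDot p v) ^ 2 * (∑ s, p s) := by
    simp only [Finset.mul_sum, ← Finset.sum_sub_distrib, ← Finset.sum_add_distrib]
    exact Finset.sum_congr rfl fun t _ => by ring
  have hnn : 0 ≤ ∑ s, p s * (v s - probDot p v) ^ 2 :=
    Finset.sum_nonneg fun t _ => mul_nonneg (hp t) (sq_nonneg _)
  rw [h, hsum] at hnn
  unfold probVar probDot at *
  nlinarith [hnn]

lemma bellman_key {S A : Type*} [Fintype S] [Fintype A] [Nonempty S] [Nonempty A]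
    (γ H U : ℝ) (hγ : 0 ≤ γ) (hH : 0 ≤ H) (hU : 0 < U)
    (r cnt : S → A → ℝ) (hcnt : ∀ s a, 1 ≤ cnt s a)
    (Phat : S → A → S → ℝ)
    (hPnonneg : ∀ s a s', 0 ≤ Phat s a s')
    (hPsum : ∀ s a, ∑ s', Phat s a s' = 1)
    (Q Q' : S → A → ℝ) (m : ℝ) (hm : ∀ s a, |Q s a - Q' s a| ≤ m)
    (s : S) (a : A) :
    bellmanOp γ H U r cnt Phat Q s a - bellmanOp γ H U r cnt Phat Q' s a ≤ γ * m := by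
  set p : S → ℝ := Phat s a with hp
  have hppos : ∀ t, 0 ≤ p t := fun t => hPnonneg s a t
  have hpsum1 : ∑ t, p t = 1 := hPsum s a
  set V : S → ℝ := clipOp H (maxOp Q) with hV
  set V' : S → ℝ := clipOp H (maxOp Q') with hV'
  have hncpos : (0:ℝ) < cnt s a := lt_of_lt_of_le one_pos (hcnt s a)
  -- basic bound on m
  have hm0 : 0 ≤ m :=
    le_trans (abs_nonneg _) (hm (Classical.arbitrary S) (Classical.arbitrary A))
  -- maxOp is Lipschitz
  have hMQ : ∀ t, maxOp Q t ≤ maxOp Q' t + m := by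
    intro t
    apply Finset.sup'_le
    intro a' _
    have h1 : Q t a' - Q' t a' ≤ m := le_trans (le_abs_self _) (hm t a')
    have h2 : Q' t a' ≤ maxOp Q' t := Finset.le_sup' _ (Finset.mem_univ a')
    linarith
  -- inf' is Lipschitz
  have hinf : Finset.univ.inf' Finset.univ_nonempty (maxOp Q)
      ≤ Finset.univ.inf' Finset.univ_nonempty (maxOp Q') + m := by
    have : Finset.univ.inf' Finset.univ_nonempty (maxOp Q) - m
        ≤ Finset.univ.inf' Finset.univ_nonempty (maxOp Q') := by
      apply Finset.le_inf'
      intro t _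
      have h1 : Finset.univ.inf' Finset.univ_nonempty (maxOp Q) ≤ maxOp Q t :=
        Finset.inf'_le _ (Finset.mem_univ t)
      linarith [hMQ t]
    linarith
  -- clipped values are Lipschitz
  have hW : ∀ t, V t - V' t ≤ m := by
    intro t
    have h1 : V t ≤ min (maxOp Q' t + m)
        ((Finset.univ.inf' Finset.univ_nonempty (maxOp Q') + H) + m) := by
      apply min_le_min (hMQ t)
      linarith
    have h2 : min (maxOp Q' t + m)
        ((Finset.univ.inf' Finset.univ_nonempty (maxOp Q') + H) + m)
        = V' t + m := by
      rw [hV', clipOp, min_add_add_right]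
    linarith [h1, h2.le]
  -- range of V
  have hVlow : ∀ t, Finset.univ.inf' Finset.univ_nonempty (maxOp Q) ≤ V t := by
    intro t
    apply le_min (Finset.inf'_le _ (Finset.mem_univ t))
    linarith
  have hVhigh : ∀ t, V t ≤ Finset.univ.inf' Finset.univ_nonempty (maxOp Q) + H :=
    fun t => min_le_right _ _
  set μ : ℝ := probDot p V with hμ
  have hμhigh : μ ≤ Finset.univ.inf' Finset.univ_nonempty (maxOp Q) + H := by
    rw [hμ, probDot]
    calc ∑ t, p t * V t
        ≤ ∑ t, p t * (Finset.univ.inf' Finset.univ_nonempty (maxOp Q) + H) :=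
          Finset.sum_le_sum fun t _ => mul_le_mul_of_nonneg_left (hVhigh t) (hppos t)
      _ = Finset.univ.inf' Finset.univ_nonempty (maxOp Q) + H := by
          rw [← Finset.sum_mul, hpsum1, one_mul]
  have hrange : ∀ t, μ - V t ≤ H := fun t => by linarith [hVlow t, hμhigh]
  set D : ℝ := probDot p V - probDot p V' with hD
  have hDsum : D = ∑ t, p t * (V t - V' t) := probDot_sub p V V'
  have hDle : D ≤ m := by
    rw [hDsum]
    calc ∑ t, p t * (V t - V' t) ≤ ∑ t, p t * m :=
          Finset.sum_le_sum fun t _ => mul_le_mul_of_nonneg_left (hW t) (hppos t)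
      _ = m := by rw [← Finset.sum_mul, hpsum1, one_mul]
  -- covariance bound
  set SVW : ℝ := ∑ t, p t * (V t * (V t - V' t)) with hSVW
  have hcov : SVW - μ * D ≤ H * (m - D) := by
    have hterm : ∀ t ∈ Finset.univ, p t * ((μ - V t) * (m - (V t - V' t)))
        ≤ p t * (H * (m - (V t - V' t))) := by
      intro t _
      apply mul_le_mul_of_nonneg_left _ (hppos t)
      apply mul_le_mul_of_nonneg_right (hrange t)
      linarith [hW t]
    have hsumle := Finset.sum_le_sum hterm
    have hlhs : ∑ t, p t * ((μ - V t) * (m - (V t - V' t)))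
        = μ * m * (∑ t, p t) - μ * (∑ t, p t * (V t - V' t))
          - m * (∑ t, p t * V t) + SVW := by
      simp only [hSVW, Finset.mul_sum, ← Finset.sum_sub_distrib, ← Finset.sum_add_distrib]
      exact Finset.sum_congr rfl fun t _ => by ring
    have hrhs : ∑ t, p t * (H * (m - (V t - V' t)))
        = H * (m * (∑ t, p t) - (∑ t, p t * (V t - V' t))) := by
      simp only [Finset.mul_sum, ← Finset.sum_sub_distrib]
      exact Finset.sum_congr rfl fun t _ => by ring
    rw [hlhs, hrhs, hpsum1, ← hDsum] at hsumle
    have hμV : ∑ t, p t * V t = μ := by rw [hμ, probDot]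
    rw [hμV] at hsumle
    nlinarith [hsumle]
  -- variance difference identity
  have hVarW : 0 ≤ probVar p (fun t => V t - V' t) := probVar_nonneg _ _ hppos hpsum1
  have hdot' : probDot p V' = μ - D := by rw [hD, hμ]; ring
  have hVarid : probVar p V - probVar p V'
      = 2 * (SVW - μ * D) - probVar p (fun t => V t - V' t) := by
    have hsq : ∑ t, p t * (V' t) ^ 2
        = (∑ t, p t * (V t) ^ 2) - 2 * SVW + ∑ t, p t * (V t - V' t) ^ 2 := by
      simp only [hSVW, Finset.mul_sum, ← Finset.sum_sub_distrib, ← Finset.sum_add_distrib]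
      exact Finset.sum_congr rfl fun t _ => by ring
    have hdotW : probDot p (fun t => V t - V' t) = D := (probDot_sub p V V').symm
    simp only [probVar, hsq, hdot', hdotW, ← hμ]
    ring
  have hVarDiff : probVar p V - probVar p V' ≤ 2 * H * (m - D) := by
    rw [hVarid]; nlinarith [hcov, hVarW]
  -- variances nonneg, sqrt setup
  have hVarV : 0 ≤ probVar p V := probVar_nonneg _ _ hppos hpsum1
  have hVarV' : 0 ≤ probVar p V' := probVar_nonneg _ _ hppos hpsum1
  set σ : ℝ := Real.sqrt (probVar p V) with hσdef
  set σ' : ℝ := Real.sqrt (probVar p V') with hσ'def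
  have hσ0 : 0 ≤ σ := Real.sqrt_nonneg _
  have hσ'0 : 0 ≤ σ' := Real.sqrt_nonneg _
  set c : ℝ := 4 * Real.sqrt (U / cnt s a) with hc
  have hUn : 0 < U / cnt s a := div_pos hU hncpos
  have hcpos : 0 < c := by
    rw [hc]; positivity
  have hcsq : c ^ 2 = 16 * (U / cnt s a) := by
    rw [hc, mul_pow, Real.sq_sqrt hUn.le]; ring
  have hk : 32 * H * U / cnt s a = 2 * H * c ^ 2 := by
    rw [hcsq]; field_simp; ring
  have key4 : 4 * Real.sqrt (probVar p V * U / cnt s a) = c * σ := by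
    rw [mul_div_assoc, Real.sqrt_mul hVarV, hσdef, hc]; ring
  have key4' : 4 * Real.sqrt (probVar p V' * U / cnt s a) = c * σ' := by
    rw [mul_div_assoc, Real.sqrt_mul hVarV', hσ'def, hc]; ring
  have hbV : bonus Phat cnt U H s a V = max (c * σ) (32 * H * U / cnt s a) := by
    rw [bonus, ← hp, key4]
  have hbV' : bonus Phat cnt U H s a V' = max (c * σ') (32 * H * U / cnt s a) := by
    rw [bonus, ← hp, key4']
  have hkpos : 0 ≤ 32 * H * U / cnt s a := by positivity
  -- main bound on the bonus difference
  have hbdiff : bonus Phat cnt U H s a V - bonus Phat cnt U H s a V' ≤ m - D := by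
    rw [hbV, hbV']
    rcases le_or_gt (c * σ) (32 * H * U / cnt s a) with hcase | hcase
    · rw [max_eq_right hcase]
      have := le_max_right (c * σ') (32 * H * U / cnt s a)
      linarith [hDle]
    · rw [max_eq_left hcase.le]
      have hb'ge : c * σ' ≤ max (c * σ') (32 * H * U / cnt s a) := le_max_left _ _
      have hcσpos : 0 < c * σ := lt_of_le_of_lt hkpos hcase
      have hσpos : 0 < σ := by nlinarith [hcσpos, hcpos, hσ0]
      have h2Hc : 2 * H * c ≤ σ := by
        rw [hk] at hcase
        have hlt : c * (2 * H * c) < c * σ := by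
          calc c * (2 * H * c) = 2 * H * c ^ 2 := by ring
            _ < c * σ := hcase
        exact ((mul_lt_mul_iff_right₀ hcpos).mp hlt).le
      have hσσ' : (σ - σ') * (σ + σ') = probVar p V - probVar p V' := by
        have e1 : σ ^ 2 = probVar p V := Real.sq_sqrt hVarV
        have e2 : σ' ^ 2 = probVar p V' := Real.sq_sqrt hVarV'
        linear_combination e1 - e2
      have hfin : c * σ - c * σ' ≤ m - D := by
        rcases le_or_gt σ σ' with hσle | hσgt
        · linarith [mul_le_mul_of_nonneg_left hσle hcpos.le, hDle]
        · have hmD : 0 ≤ m - D := by linarith [hDle]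
          have h1 : (σ - σ') * (σ + σ') ≤ 2 * H * (m - D) := by
            rw [hσσ']; exact hVarDiff
          have h2 : (σ - σ') * σ ≤ (σ - σ') * (σ + σ') := by
            apply mul_le_mul_of_nonneg_left _ (by linarith : 0 ≤ σ - σ')
            linarith [hσ'0]
          have h3 : (σ - σ') * σ ≤ 2 * H * (m - D) := le_trans h2 h1
          have h4 : c * ((σ - σ') * σ) ≤ c * (2 * H * (m - D)) :=
            mul_le_mul_of_nonneg_left h3 hcpos.le
          have h5 : (2 * H * c) * (m - D) ≤ σ * (m - D) :=
            mul_le_mul_of_nonneg_right h2Hc hmD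
          have h6 : (c * σ - c * σ') * σ ≤ (m - D) * σ := by nlinarith [h4, h5]
          exact le_of_mul_le_mul_right h6 hσpos
      linarith [hb'ge, hfin]
  -- assemble
  have hexp : bellmanOp γ H U r cnt Phat Q s a - bellmanOp γ H U r cnt Phat Q' s a
      = γ * (D + (bonus Phat cnt U H s a V - bonus Phat cnt U H s a V')) := by
    simp only [bellmanOp, ← hp, ← hV, ← hV', hD]
    ring
  rw [hexp]
  apply mul_le_mul_of_nonneg_left _ hγ
  linarith [hbdiff]

/-- The clipped optimistic empirical Bellman operator is a `γ`-contraction in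
the supremum norm over the (finite) set of state-action pairs. -/
theorem bellmanOp_contraction
    {S A : Type*} [Fintype S] [Fintype A] [Nonempty S] [Nonempty A]
    (γ H U : ℝ) (hγ₀ : 0 < γ) (hγ₁ : γ < 1) (hH : 0 ≤ H) (hU : 0 < U)
    (r : S → A → ℝ) (hr : ∀ s a, r s a ∈ Set.Icc (0 : ℝ) 1)
    (cnt : S → A → ℝ) (hcnt : ∀ s a, 1 ≤ cnt s a)
    (Phat : S → A → S → ℝ)
    (hPnonneg : ∀ s a s', 0 ≤ Phat s a s')
    (hPle : ∀ s a s', Phat s a s' ≤ 1)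
    (hPsum : ∀ s a, ∑ s', Phat s a s' = 1)
    (Q Q' : S → A → ℝ) :
    Finset.univ.sup' Finset.univ_nonempty
        (fun p : S × A =>
          |bellmanOp γ H U r cnt Phat Q p.1 p.2 - bellmanOp γ H U r cnt Phat Q' p.1 p.2|)
      ≤ γ * Finset.univ.sup' Finset.univ_nonempty
          (fun p : S × A => |Q p.1 p.2 - Q' p.1 p.2|) := by
  set M := Finset.univ.sup' Finset.univ_nonempty
      (fun p : S × A => |Q p.1 p.2 - Q' p.1 p.2|) with hMdef
  have hm : ∀ s a, |Q s a - Q' s a| ≤ M := fun s a =>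
    Finset.le_sup' (fun p : S × A => |Q p.1 p.2 - Q' p.1 p.2|) (Finset.mem_univ (s, a))
  have hm' : ∀ s a, |Q' s a - Q s a| ≤ M := fun s a => by
    rw [abs_sub_comm]; exact hm s a
  apply Finset.sup'_le
  rintro ⟨s, a⟩ -
  rw [abs_sub_le_iff]
  exact ⟨bellman_key γ H U hγ₀.le hH hU r cnt hcnt Phat hPnonneg hPsum Q Q' M hm s a,
    bellman_key γ H U hγ₀.le hH hU r cnt hcnt Phat hPnonneg hPsum Q' Q M hm' s a⟩
end

section
/- Let S be a positive integer, let c₁, c₂ ≥ 0 be constants with 2c₁² ≤ c₂, and let C ≥ 0. Define f(p, v, n, u) = p·v + max{ c₁·√(𝕍(p,v)·u/n), c₂·C·u/n } for p a probability vector on {1,…,S}, v ∈ [0, 2C]^S, and n, u > 0. Then f is nondecreasing in v: for all probability vectors p on {1,…,S}, all n, u > 0, and all v, v' ∈ [0,2C]^S with v(i) ≥ v'(i) for every i, one has f(p,v,n,u) ≥ f(p,v',n,u). -/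
open Finset

/-- The function `f(p,v,n,u) = p·v + max{c₁√(𝕍(p,v)u/n), c₂Cu/n}`. -/
noncomputable def bonusValue {S : Type*} [Fintype S] (c₁ c₂ C : ℝ)
    (p v : S → ℝ) (n u : ℝ) : ℝ :=
  probDot p v + max (c₁ * Real.sqrt (probVar p v * u / n)) (c₂ * C * u / n)

lemma probVar_nonneg' {S : ℕ} (p v : Fin S → ℝ) (hp : ∀ i, 0 ≤ p i)
    (hs : ∑ i, p i = 1) : 0 ≤ probVar p v := by
  have key := Finset.sum_mul_sq_le_sq_mul_sq Finset.univ
    (fun i => Real.sqrt (p i)) (fun i => Real.sqrt (p i) * v i)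
  have h1 : ∀ i : Fin S, Real.sqrt (p i) * (Real.sqrt (p i) * v i) = p i * v i := by
    intro i
    rw [← mul_assoc, Real.mul_self_sqrt (hp i)]
  have h2 : ∀ i : Fin S, Real.sqrt (p i) ^ 2 = p i := fun i => Real.sq_sqrt (hp i)
  have h3 : ∀ i : Fin S, (Real.sqrt (p i) * v i) ^ 2 = p i * v i ^ 2 := by
    intro i; rw [mul_pow, h2]
  simp only [h1, h2, h3, hs, one_mul] at key
  have : probDot p v = ∑ i, p i * v i := rfl
  unfold probVar
  rw [this]
  linarith

/-- Monotonicity of `f(p,v,n,u) = p·v + max{c₁√(𝕍(p,v)u/n), c₂Cu/n}` in `v`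
over `[0, 2C]^S`, when `2c₁² ≤ c₂`. -/
theorem bonusValue_monotone
    (S : ℕ) (hS : 1 ≤ S)
    (c₁ c₂ : ℝ) (hc₁ : 0 ≤ c₁) (hc₂ : 0 ≤ c₂) (hcc : 2 * c₁ ^ 2 ≤ c₂)
    (C : ℝ) (hC : 0 ≤ C)
    (p : Fin S → ℝ) (hpnonneg : ∀ i, 0 ≤ p i) (hple : ∀ i, p i ≤ 1)
    (hpsum : ∑ i, p i = 1)
    (n u : ℝ) (hn : 0 < n) (hu : 0 < u)
    (v v' : Fin S → ℝ)
    (hv : ∀ i, v i ∈ Set.Icc (0 : ℝ) (2 * C))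
    (hv' : ∀ i, v' i ∈ Set.Icc (0 : ℝ) (2 * C))
    (hvv : ∀ i, v' i ≤ v i) :
    bonusValue c₁ c₂ C p v' n u ≤ bonusValue c₁ c₂ C p v n u := by
  have hun : 0 < u / n := div_pos hu hn
  set D := probDot p v with hD
  set D' := probDot p v' with hD'
  have hδ : D' ≤ D :=
    Finset.sum_le_sum fun i _ => mul_le_mul_of_nonneg_left (hvv i) (hpnonneg i)
  have hDle : D ≤ 2 * C := by
    have : D ≤ ∑ i, p i * (2 * C) :=
      Finset.sum_le_sum fun i _ => mul_le_mul_of_nonneg_left (hv i).2 (hpnonneg i)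
    rwa [← Finset.sum_mul, hpsum, one_mul] at this
  have hD'le : D' ≤ 2 * C := by
    have : D' ≤ ∑ i, p i * (2 * C) :=
      Finset.sum_le_sum fun i _ => mul_le_mul_of_nonneg_left (hv' i).2 (hpnonneg i)
    rwa [← Finset.sum_mul, hpsum, one_mul] at this
  have hD'0 : 0 ≤ D' :=
    Finset.sum_nonneg fun i _ => mul_nonneg (hpnonneg i) (hv' i).1
  have hD0 : 0 ≤ D :=
    Finset.sum_nonneg fun i _ => mul_nonneg (hpnonneg i) (hv i).1
  set δ := D - D' with hδdef
  have hδ0 : 0 ≤ δ := by linarith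
  set V := probVar p v with hV
  set V' := probVar p v' with hV'
  have hVnn : 0 ≤ V := probVar_nonneg' p v hpnonneg hpsum
  have hV'nn : 0 ≤ V' := probVar_nonneg' p v' hpnonneg hpsum
  -- V' ≤ V + 4Cδ
  have hsumsq : ∑ i, p i * (v' i) ^ 2 ≤ ∑ i, p i * (v i) ^ 2 := by
    refine Finset.sum_le_sum fun i _ => mul_le_mul_of_nonneg_left ?_ (hpnonneg i)
    exact pow_le_pow_left₀ (hv' i).1 (hvv i) 2
  have hVdiff : V' ≤ V + 4 * C * δ := by
    have hVeq : V = (∑ i, p i * (v i) ^ 2) - D ^ 2 := rfl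
    have hV'eq : V' = (∑ i, p i * (v' i) ^ 2) - D' ^ 2 := rfl
    nlinarith [mul_nonneg hδ0 (by linarith : 0 ≤ 4 * C - (D + D'))]
  set β := c₂ * C * u / n with hβ
  have hβ0 : 0 ≤ β := by positivity
  set A := c₁ * Real.sqrt (V * u / n) with hA
  set A' := c₁ * Real.sqrt (V' * u / n) with hA'
  have hA0 : 0 ≤ A := mul_nonneg hc₁ (Real.sqrt_nonneg _)
  have hA'0 : 0 ≤ A' := mul_nonneg hc₁ (Real.sqrt_nonneg _)
  set M := max A β with hM
  have hAM : A ≤ M := le_max_left _ _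
  have hβM : β ≤ M := le_max_right _ _
  have hM0 : 0 ≤ M := le_trans hβ0 hβM
  have hAsq : A ^ 2 = c₁ ^ 2 * (V * u / n) := by
    rw [hA, mul_pow, Real.sq_sqrt (by positivity)]
  have hA'sq : A' ^ 2 = c₁ ^ 2 * (V' * u / n) := by
    rw [hA', mul_pow, Real.sq_sqrt (by positivity)]
  have hc₁sq : 0 ≤ c₁ ^ 2 := sq_nonneg c₁
  have hkey : A' ^ 2 ≤ M ^ 2 + 2 * M * δ := by
    have h1 : c₁ ^ 2 * (V' * u / n) ≤ c₁ ^ 2 * ((V + 4 * C * δ) * u / n) := by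
      apply mul_le_mul_of_nonneg_left _ hc₁sq
      apply div_le_div_of_nonneg_right _ hn.le
      exact mul_le_mul_of_nonneg_right hVdiff hu.le
    have h2 : c₁ ^ 2 * ((V + 4 * C * δ) * u / n)
        = c₁ ^ 2 * (V * u / n) + (2 * c₁ ^ 2) * (2 * C * δ * u / n) := by ring
    have h3 : (2 * c₁ ^ 2) * (2 * C * δ * u / n) ≤ c₂ * (2 * C * δ * u / n) := by
      apply mul_le_mul_of_nonneg_right hcc
      positivity
    have h4 : c₂ * (2 * C * δ * u / n) = 2 * β * δ := by rw [hβ]; ring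
    have h5 : A ^ 2 ≤ M ^ 2 := pow_le_pow_left₀ hA0 hAM 2
    have h6 : 2 * β * δ ≤ 2 * M * δ :=
      mul_le_mul_of_nonneg_right (by linarith : 2 * β ≤ 2 * M) hδ0
    rw [hA'sq]
    calc c₁ ^ 2 * (V' * u / n) ≤ c₁ ^ 2 * ((V + 4 * C * δ) * u / n) := h1
      _ = c₁ ^ 2 * (V * u / n) + (2 * c₁ ^ 2) * (2 * C * δ * u / n) := h2
      _ ≤ c₁ ^ 2 * (V * u / n) + c₂ * (2 * C * δ * u / n) := by linarith
      _ = A ^ 2 + 2 * β * δ := by rw [hAsq, h4]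
      _ ≤ M ^ 2 + 2 * M * δ := by linarith
  have hA'le : A' ≤ M + δ := by
    have hsq : A' ^ 2 ≤ (M + δ) ^ 2 := by nlinarith [sq_nonneg δ]
    calc A' = Real.sqrt (A' ^ 2) := (Real.sqrt_sq hA'0).symm
      _ ≤ Real.sqrt ((M + δ) ^ 2) := Real.sqrt_le_sqrt hsq
      _ = M + δ := Real.sqrt_sq (by linarith)
  have hmax : max A' β ≤ M + δ := by
    apply max_le hA'le (by linarith)
  show D' + max A' β ≤ D + M
  linarith
end
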